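/- Let N ≥ 1, h = 1/N, Δt > 0, β ∈ ℝ, γ > 0, let m be a grid function with |m(I)| = 1 for every I, let ṽ be a grid function satisfying (ṽ(I) − m(I))/Δt = −β m(I) × (Δ_h ṽ)(I) − γ m(I) × (m(I) × (Δ_h ṽ)(I)) for every I, and set m⁺(I) = ṽ(I)/|ṽ(I)| (well defined since |ṽ(I)| ≥ 1). Then the original discrete energy dissipates unconditionally: (1/2)‖∇_h m⁺‖_2^2 − (1/2)‖∇_h m‖_2^2 ≤ −γ Δt · h^3 Σ_I | m(I) × (Δ_h ṽ)(I) |^2 ≤ 0. -/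

import Mathlib

open scoped BigOperators RealInnerProductSpace

noncomputable section

/-- Euclidean 3-space. -/
abbrev E3 : Type := EuclideanSpace ℝ (Fin 3)

/-- Cross product on `E3`. -/
def cross3 (a b : E3) : E3 :=
  (WithLp.equiv 2 (Fin 3 → ℝ)).symm
    ![a 1 * b 2 - a 2 * b 1, a 2 * b 0 - a 0 * b 2, a 0 * b 1 - a 1 * b 0]

/-- Index set of the triply periodic grid. -/
abbrev Idx (N : ℕ) := Fin 3 → ZMod N

/-- Grid functions. -/
abbrev GridFun (N : ℕ) := Idx N → E3

/-- Forward difference in direction `r`. -/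
def fd {N : ℕ} (h : ℝ) (r : Fin 3) (f : GridFun N) (I : Idx N) : E3 :=
  (1 / h) • (f (I + Pi.single r 1) - f I)

/-- Centered average in direction `r`. -/
def ca {N : ℕ} (r : Fin 3) (f : GridFun N) (I : Idx N) : E3 :=
  ((1 : ℝ) / 2) • (f (I + Pi.single r 1) + f I)

/-- Discrete Laplacian. -/
def dlap {N : ℕ} (h : ℝ) (f : GridFun N) (I : Idx N) : E3 :=
  ∑ r : Fin 3, (1 / h ^ 2) • (f (I + Pi.single r 1) - (2 : ℝ) • f I + f (I - Pi.single r 1))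

/-- Squared discrete `L²` norm. -/
def l2sq {N : ℕ} [NeZero N] (h : ℝ) (f : GridFun N) : ℝ :=
  h ^ 3 * ∑ I : Idx N, ‖f I‖ ^ 2

/-- Squared discrete gradient (`H¹` seminorm). -/
def gradsq {N : ℕ} [NeZero N] (h : ℝ) (f : GridFun N) : ℝ :=
  h ^ 3 * ∑ I : Idx N, ∑ r : Fin 3, ‖fd h r f I‖ ^ 2

/-- Discrete `ℓᵖ` norm, for real `p`. -/
def pnorm {N : ℕ} [NeZero N] (h p : ℝ) (f : GridFun N) : ℝ :=
  (h ^ 3 * ∑ I : Idx N, ‖f I‖ ^ p) ^ (1 / p)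

/-- Discrete `ℓ^∞` norm. -/
def inorm {N : ℕ} [NeZero N] (f : GridFun N) : ℝ :=
  ⨆ I : Idx N, ‖f I‖

/-- Discrete `ℓ^∞` norm of the gradient. -/
def ginorm {N : ℕ} [NeZero N] (h : ℝ) (f : GridFun N) : ℝ :=
  ⨆ I : Idx N, ⨆ r : Fin 3, ‖fd h r f I‖

/- ### Auxiliary lemmas -/

lemma inner3 (x y : E3) : ⟪x, y⟫ = x 0 * y 0 + x 1 * y 1 + x 2 * y 2 := by
  simp [PiLp.inner_apply, Fin.sum_univ_three, RCLike.inner_apply]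
  ring

lemma cross3_apply (a b : E3) (i : Fin 3) :
    cross3 a b i = ![a 1 * b 2 - a 2 * b 1, a 2 * b 0 - a 0 * b 2, a 0 * b 1 - a 1 * b 0] i := by
  simp [cross3]

lemma inner_cross_left (a b : E3) : ⟪cross3 a b, a⟫ = 0 := by
  simp only [inner3, cross3_apply, Matrix.cons_val_zero, Matrix.cons_val_one, Matrix.head_cons,
    Matrix.cons_val_two, Matrix.tail_cons]
  ring

lemma inner_cross_right (a b : E3) : ⟪cross3 a b, b⟫ = 0 := by
  simp only [inner3, cross3_apply, Matrix.cons_val_zero, Matrix.cons_val_one, Matrix.head_cons,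
    Matrix.cons_val_two, Matrix.tail_cons]
  ring

lemma inner_cross_cross (a b : E3) : ⟪cross3 a (cross3 a b), b⟫ = -‖cross3 a b‖ ^ 2 := by
  rw [← real_inner_self_eq_norm_sq]
  simp only [inner3, cross3_apply, Matrix.cons_val_zero, Matrix.cons_val_one, Matrix.head_cons,
    Matrix.cons_val_two, Matrix.tail_cons]
  ring

lemma sum_shift {N : ℕ} [NeZero N] (g : Idx N → ℝ) (e : Idx N) :
    ∑ I : Idx N, g (I + e) = ∑ I : Idx N, g I :=
  Equiv.sum_comp (Equiv.addRight e) g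

lemma sbp_r {N : ℕ} [NeZero N] (f g : GridFun N) (e : Idx N) :
    ∑ I : Idx N, ⟪f (I + e) - f I, g (I + e) - g I⟫
      = -∑ I : Idx N, ⟪f I, g (I + e) - (2:ℝ) • g I + g (I - e)⟫ := by
  have h1 : ∑ I : Idx N, ⟪f (I + e), g (I + e)⟫ = ∑ I : Idx N, ⟪f I, g I⟫ :=
    sum_shift (fun I => ⟪f I, g I⟫) e
  have h2 : ∑ I : Idx N, ⟪f (I + e), g I⟫ = ∑ I : Idx N, ⟪f I, g (I - e)⟫ := by
    have := sum_shift (fun I => ⟪f I, g (I - e)⟫) e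
    simpa using this
  simp only [inner_sub_left, inner_sub_right, inner_add_right, inner_smul_right,
    RCLike.ofReal_real_eq_id, id_eq, Finset.sum_sub_distrib, Finset.sum_add_distrib,
    ← Finset.mul_sum]
  linarith [h1, h2]

lemma sbp {N : ℕ} [NeZero N] (h : ℝ) (f g : GridFun N) :
    ∑ I : Idx N, ∑ r : Fin 3, ⟪fd h r f I, fd h r g I⟫
      = -∑ I : Idx N, ⟪f I, dlap h g I⟫ := by
  rw [Finset.sum_comm]
  unfold fd dlap
  simp only [inner_sum, real_inner_smul_left, real_inner_smul_right, ← Finset.mul_sum]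
  have key : ∑ r : Fin 3, ∑ I : Idx N,
      ⟪f (I + Pi.single r 1) - f I, g (I + Pi.single r 1) - g I⟫
      = -∑ r : Fin 3, ∑ I : Idx N,
        ⟪f I, g (I + Pi.single r 1) - (2:ℝ) • g I + g (I - Pi.single r 1)⟫ := by
    rw [← Finset.sum_neg_distrib]
    exact Finset.sum_congr rfl fun r _ => sbp_r f g _
  rw [key, Finset.sum_comm]
  ring

lemma proj_lip (a b : E3) (ha : 1 ≤ ‖a‖) (hb : 1 ≤ ‖b‖) :
    ‖‖a‖⁻¹ • a - ‖b‖⁻¹ • b‖ ≤ ‖a - b‖ := by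
  have ha0 : (0:ℝ) < ‖a‖ := lt_of_lt_of_le one_pos ha
  have hb0 : (0:ℝ) < ‖b‖ := lt_of_lt_of_le one_pos hb
  have hcs : ⟪a, b⟫ ≤ ‖a‖ * ‖b‖ := real_inner_le_norm a b
  have hsq : ‖‖a‖⁻¹ • a - ‖b‖⁻¹ • b‖^2 ≤ ‖a - b‖^2 := by
    rw [norm_sub_sq_real, norm_sub_sq_real]
    rw [norm_smul, norm_smul, real_inner_smul_left, real_inner_smul_right]
    simp only [norm_inv, norm_norm]
    rw [inv_mul_cancel₀ (ne_of_gt ha0), inv_mul_cancel₀ (ne_of_gt hb0)]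
    have key : (‖a‖ * ‖b‖) * ((1:ℝ)^2 - 2 * (‖a‖⁻¹ * (‖b‖⁻¹ * ⟪a, b⟫)) + 1^2)
        ≤ (‖a‖ * ‖b‖) * (‖a‖^2 - 2 * ⟪a, b⟫ + ‖b‖^2) := by
      have e1 : (‖a‖ * ‖b‖) * ((1:ℝ)^2 - 2 * (‖a‖⁻¹ * (‖b‖⁻¹ * ⟪a, b⟫)) + 1^2)
          = 2 * (‖a‖ * ‖b‖) - 2 * ⟪a, b⟫ := by
        field_simp
        ring
      rw [e1]
      have hab1 : (1:ℝ) ≤ ‖a‖ * ‖b‖ := by nlinarith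
      nlinarith [sq_nonneg (‖a‖ - ‖b‖), mul_pos ha0 hb0,
        mul_nonneg (sub_nonneg.mpr hab1) (sub_nonneg.mpr hcs)]
    exact le_of_mul_le_mul_left (by linarith [key]) (mul_pos ha0 hb0)
  have h5 := Real.sqrt_le_sqrt hsq
  rwa [Real.sqrt_sq (norm_nonneg _), Real.sqrt_sq (norm_nonneg _)] at h5

lemma half_sq_diff_le (x y : E3) : (1/2)*‖y‖^2 - (1/2)*‖x‖^2 ≤ ⟪y - x, y⟫ := by
  have h1 : ⟪y - x, y⟫ = ‖y‖^2 - ⟪x, y⟫ := by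
    rw [inner_sub_left, real_inner_self_eq_norm_sq]
  have h2 := norm_sub_sq_real y x
  have h3 : (0:ℝ) ≤ ‖y - x‖^2 := sq_nonneg _
  have h4 : ⟪y, x⟫ = ⟪x, y⟫ := real_inner_comm x y
  linarith

/-- unconditional dissipation of the original discrete energy in one step. -/
theorem statement10 (N : ℕ) [NeZero N] (hN : 1 ≤ N) (h Δt β γ : ℝ) (hh : h = 1 / (N : ℝ))
    (hΔt : 0 < Δt) (hγ : 0 < γ) (m v : GridFun N) (hm : ∀ I, ‖m I‖ = 1)
    (hscheme : ∀ I : Idx N,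
      (1 / Δt) • (v I - m I)
        = -(β • cross3 (m I) (dlap h v I))
            - γ • cross3 (m I) (cross3 (m I) (dlap h v I))) :
    (1 / 2) * gradsq h (fun I => ‖v I‖⁻¹ • v I) - (1 / 2) * gradsq h m
        ≤ -(γ * Δt * (h ^ 3 * ∑ I : Idx N, ‖cross3 (m I) (dlap h v I)‖ ^ 2)) ∧
      -(γ * Δt * (h ^ 3 * ∑ I : Idx N, ‖cross3 (m I) (dlap h v I)‖ ^ 2)) ≤ 0 := by
  have hNpos : (0:ℝ) < (N : ℝ) := by
    exact_mod_cast Nat.lt_of_lt_of_le Nat.zero_lt_one hN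
  have hhpos : 0 < h := by rw [hh]; positivity
  have hΔt' : Δt ≠ 0 := ne_of_gt hΔt
  -- step 1: the update formula
  have hstep : ∀ I, v I - m I
      = Δt • (-(β • cross3 (m I) (dlap h v I))
          - γ • cross3 (m I) (cross3 (m I) (dlap h v I))) := by
    intro I
    rw [← hscheme I, smul_smul, mul_one_div, div_self hΔt', one_smul]
  -- step 2: ⟪m, v⟫ = 1
  have hmv : ∀ I, ⟪m I, v I⟫ = 1 := by
    intro I
    have hz : ⟪v I - m I, m I⟫ = 0 := by
      rw [hstep I, real_inner_smul_left, inner_sub_left, inner_neg_left,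
        real_inner_smul_left, real_inner_smul_left, inner_cross_left, inner_cross_left]
      ring
    have hmm : ⟪m I, m I⟫ = 1 := by
      rw [real_inner_self_eq_norm_sq, hm I]; norm_num
    rw [inner_sub_left] at hz
    rw [real_inner_comm] at hz
    linarith [hz, hmm]
  -- step 3: ‖v‖ ≥ 1
  have hv1 : ∀ I, 1 ≤ ‖v I‖ := by
    intro I
    have := real_inner_le_norm (m I) (v I)
    rw [hmv I, hm I, one_mul] at this
    exact this
  -- step 4: the inner product identity
  have hinner : ∀ I, ⟪v I - m I, dlap h v I⟫
      = Δt * (γ * ‖cross3 (m I) (dlap h v I)‖ ^ 2) := by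
    intro I
    rw [hstep I, real_inner_smul_left, inner_sub_left, inner_neg_left,
      real_inner_smul_left, real_inner_smul_left, inner_cross_right, inner_cross_cross]
    ring
  -- step 5: projection does not increase the gradient
  have hproj : gradsq h (fun I => ‖v I‖⁻¹ • v I) ≤ gradsq h v := by
    unfold gradsq
    apply mul_le_mul_of_nonneg_left _ (by positivity)
    apply Finset.sum_le_sum
    intro I _
    apply Finset.sum_le_sum
    intro r _
    have hle : ‖fd h r (fun J => ‖v J‖⁻¹ • v J) I‖ ≤ ‖fd h r v I‖ := by
      unfold fd
      rw [norm_smul, norm_smul]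
      exact mul_le_mul_of_nonneg_left (proj_lip _ _ (hv1 _) (hv1 _)) (norm_nonneg _)
    exact pow_le_pow_left₀ (norm_nonneg _) hle 2
  -- step 6: energy inequality for v
  have hkey : (1/2) * gradsq h v - (1/2) * gradsq h m
      ≤ -(γ * Δt * (h ^ 3 * ∑ I : Idx N, ‖cross3 (m I) (dlap h v I)‖ ^ 2)) := by
    have hfd : ∀ (I : Idx N) (r : Fin 3),
        fd h r (fun J => v J - m J) I = fd h r v I - fd h r m I := by
      intro I r
      simp only [fd, smul_sub]
      module
    have e1 : (1/2) * gradsq h v - (1/2) * gradsq h m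
        = h ^ 3 * ∑ I : Idx N, ∑ r : Fin 3,
            ((1/2)*‖fd h r v I‖^2 - (1/2)*‖fd h r m I‖^2) := by
      unfold gradsq
      simp only [Finset.sum_sub_distrib, ← Finset.mul_sum]
      ring
    have e2 : ∑ I : Idx N, ∑ r : Fin 3,
          ((1/2)*‖fd h r v I‖^2 - (1/2)*‖fd h r m I‖^2)
        ≤ ∑ I : Idx N, ∑ r : Fin 3, ⟪fd h r (fun J => v J - m J) I, fd h r v I⟫ := by
      apply Finset.sum_le_sum
      intro I _
      apply Finset.sum_le_sum
      intro r _
      rw [hfd I r]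
      exact half_sq_diff_le _ _
    have e3 : ∑ I : Idx N, ∑ r : Fin 3, ⟪fd h r (fun J => v J - m J) I, fd h r v I⟫
        = -∑ I : Idx N, ⟪v I - m I, dlap h v I⟫ := sbp h (fun J => v J - m J) v
    have e4 : ∑ I : Idx N, ⟪v I - m I, dlap h v I⟫
        = Δt * (γ * ∑ I : Idx N, ‖cross3 (m I) (dlap h v I)‖ ^ 2) := by
      rw [Finset.mul_sum, Finset.mul_sum]
      exact Finset.sum_congr rfl fun I _ => hinner I
    calc (1/2) * gradsq h v - (1/2) * gradsq h m
        = h ^ 3 * ∑ I : Idx N, ∑ r : Fin 3,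
            ((1/2)*‖fd h r v I‖^2 - (1/2)*‖fd h r m I‖^2) := e1
      _ ≤ h ^ 3 * ∑ I : Idx N, ∑ r : Fin 3,
            ⟪fd h r (fun J => v J - m J) I, fd h r v I⟫ :=
          mul_le_mul_of_nonneg_left e2 (by positivity)
      _ = -(γ * Δt * (h ^ 3 * ∑ I : Idx N, ‖cross3 (m I) (dlap h v I)‖ ^ 2)) := by
          rw [e3, e4]; ring
  have hsum_nonneg : (0:ℝ) ≤ ∑ I : Idx N, ‖cross3 (m I) (dlap h v I)‖ ^ 2 :=
    Finset.sum_nonneg fun I _ => sq_nonneg _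
  constructor
  · linarith [hproj, hkey]
  · have : (0:ℝ) ≤ γ * Δt * (h ^ 3 * ∑ I : Idx N, ‖cross3 (m I) (dlap h v I)‖ ^ 2) := by
      have : (0:ℝ) ≤ h ^ 3 := by positivity
      positivity
    linarith
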